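/- For 0 < α < 1 and probability mass functions ν, θ, μ on a finite set S with μ ⪯ ν and μ ⪯ θ, one has R_α(ν‖θ) ≤ (1/α) D(μ‖θ) − (1/(α−1)) D(μ‖ν). -/

import Mathlib

open Finset Real
open Classical

/-- For 0 < α < 1 and pmfs ν, θ, μ with μ ⪯ ν and μ ⪯ θ,
R_α(ν‖θ) ≤ (1/α) D(μ‖θ) - (1/(α-1)) D(μ‖ν). -/
theorem renyi_le_relent_combination {S : Type} [Fintype S]
    (ν θ μ : S → ℝ) (α : ℝ) (hα0 : 0 < α) (hα1 : α < 1)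
    (hν0 : ∀ x, 0 ≤ ν x) (hν1 : ∑ x, ν x = 1)
    (hθ0 : ∀ x, 0 ≤ θ x) (hθ1 : ∑ x, θ x = 1)
    (hμ0 : ∀ x, 0 ≤ μ x) (hμ1 : ∑ x, μ x = 1)
    (hμν : ∀ x, ν x = 0 → μ x = 0)
    (hμθ : ∀ x, θ x = 0 → μ x = 0) :
    (1 / (α * (α - 1))) *
        Real.log (∑ x ∈ Finset.univ.filter (fun x => 0 < ν x * θ x),
          ν x ^ α * θ x ^ (1 - α)) ≤
      (1 / α) * (∑ x ∈ Finset.univ.filter (fun x => 0 < μ x),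
          μ x * Real.log (μ x / θ x)) -
        (1 / (α - 1)) * (∑ x ∈ Finset.univ.filter (fun x => 0 < μ x),
          μ x * Real.log (μ x / ν x)) := by
  classical
  set T : Finset S := Finset.univ.filter (fun x => 0 < μ x) with hT
  set U : Finset S := Finset.univ.filter (fun x => 0 < ν x * θ x) with hU
  -- positivity of ν, θ on T
  have hνT : ∀ x ∈ T, 0 < ν x := by
    intro x hx
    rw [hT, Finset.mem_filter] at hx
    rcases (hν0 x).lt_or_eq with h | h
    · exact h
    · exact absurd (hμν x h.symm) (by linarith [hx.2])
  have hθT : ∀ x ∈ T, 0 < θ x := by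
    intro x hx
    rw [hT, Finset.mem_filter] at hx
    rcases (hθ0 x).lt_or_eq with h | h
    · exact h
    · exact absurd (hμθ x h.symm) (by linarith [hx.2])
  have hμT : ∀ x ∈ T, 0 < μ x := by
    intro x hx; rw [hT, Finset.mem_filter] at hx; exact hx.2
  -- sum of μ over T is 1
  have hsumT : ∑ x ∈ T, μ x = 1 := by
    rw [← hμ1]
    apply Finset.sum_subset (Finset.filter_subset _ _)
    intro x _ hx
    simp only [hT, Finset.mem_filter, Finset.mem_univ, true_and, not_lt] at hx
    linarith [hμ0 x]
  -- the weight function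
  set w : S → ℝ := fun x => ν x ^ α * θ x ^ (1 - α) / μ x with hw
  have hwpos : ∀ x ∈ T, 0 < w x := by
    intro x hx
    exact div_pos (mul_pos (Real.rpow_pos_of_pos (hνT x hx) _)
      (Real.rpow_pos_of_pos (hθT x hx) _)) (hμT x hx)
  -- Jensen
  have jensen : ∑ x ∈ T, μ x • Real.log (w x) ≤
      Real.log (∑ x ∈ T, μ x • w x) := by
    apply (strictConcaveOn_log_Ioi.concaveOn).le_map_sum
      (fun x hx => (hμT x hx).le) hsumT
    intro x hx
    exact hwpos x hx
  have hμw : ∀ x ∈ T, μ x • w x = ν x ^ α * θ x ^ (1 - α) := by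
    intro x hx
    have := (hμT x hx).ne'
    simp only [hw, smul_eq_mul]
    field_simp
  have hsum_eq : ∑ x ∈ T, μ x • w x = ∑ x ∈ T, ν x ^ α * θ x ^ (1 - α) :=
    Finset.sum_congr rfl hμw
  -- T ⊆ U and the small sum is ≤ the big sum, and positive
  have hTU : T ⊆ U := by
    intro x hx
    rw [hU, Finset.mem_filter]
    exact ⟨Finset.mem_univ x, mul_pos (hνT x hx) (hθT x hx)⟩
  have hsle : ∑ x ∈ T, ν x ^ α * θ x ^ (1 - α) ≤
      ∑ x ∈ U, ν x ^ α * θ x ^ (1 - α) := by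
    apply Finset.sum_le_sum_of_subset_of_nonneg hTU
    intro x _ _
    exact mul_nonneg (Real.rpow_nonneg (hν0 x) _) (Real.rpow_nonneg (hθ0 x) _)
  have hTne : T.Nonempty := by
    by_contra h
    rw [Finset.not_nonempty_iff_eq_empty] at h
    rw [h, Finset.sum_empty] at hsumT
    norm_num at hsumT
  have hspos : 0 < ∑ x ∈ T, ν x ^ α * θ x ^ (1 - α) := by
    apply Finset.sum_pos
    · intro x hx
      exact mul_pos (Real.rpow_pos_of_pos (hνT x hx) _)
        (Real.rpow_pos_of_pos (hθT x hx) _)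
    · exact hTne
  have hlogle : Real.log (∑ x ∈ T, ν x ^ α * θ x ^ (1 - α)) ≤
      Real.log (∑ x ∈ U, ν x ^ α * θ x ^ (1 - α)) :=
    Real.log_le_log hspos hsle
  -- per-term identity relating log w to the KL integrands
  have hterm : ∀ x ∈ T, μ x • Real.log (w x) =
      -((1 - α) * (μ x * Real.log (μ x / θ x)) + α * (μ x * Real.log (μ x / ν x))) := by
    intro x hx
    have hμx := hμT x hx
    have hνx := hνT x hx
    have hθx := hθT x hx
    have h1 : Real.log (w x) = α * Real.log (ν x) + (1 - α) * Real.log (θ x)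
        - Real.log (μ x) := by
      rw [hw]
      rw [Real.log_div (by positivity) hμx.ne',
        Real.log_mul (by positivity) (by positivity),
        Real.log_rpow hνx, Real.log_rpow hθx]
    rw [h1, Real.log_div hμx.ne' hθx.ne', Real.log_div hμx.ne' hνx.ne',
      smul_eq_mul]
    ring
  -- key inequality
  have key : -Real.log (∑ x ∈ U, ν x ^ α * θ x ^ (1 - α)) ≤
      (1 - α) * (∑ x ∈ T, μ x * Real.log (μ x / θ x)) +
        α * (∑ x ∈ T, μ x * Real.log (μ x / ν x)) := by
    have h2 : ∑ x ∈ T, μ x • Real.log (w x) =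
        -((1 - α) * (∑ x ∈ T, μ x * Real.log (μ x / θ x)) +
          α * (∑ x ∈ T, μ x * Real.log (μ x / ν x))) := by
      rw [Finset.sum_congr rfl hterm]
      rw [Finset.sum_neg_distrib]
      congr 1
      rw [Finset.sum_add_distrib, ← Finset.mul_sum, ← Finset.mul_sum]
    have h3 := jensen
    rw [h2, hsum_eq] at h3
    linarith [hlogle]
  -- final arithmetic
  set L := Real.log (∑ x ∈ U, ν x ^ α * θ x ^ (1 - α)) with hL
  set Dθ := ∑ x ∈ T, μ x * Real.log (μ x / θ x) with hDθ
  set Dν := ∑ x ∈ T, μ x * Real.log (μ x / ν x) with hDν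
  have hα : α ≠ 0 := hα0.ne'
  have hα1' : α - 1 ≠ 0 := by linarith
  have hpos : 0 < α * (1 - α) := by nlinarith
  have heq : (α * (1 - α)) * ((1 / (α * (α - 1))) * L -
      ((1 / α) * Dθ - (1 / (α - 1)) * Dν)) =
      -L - ((1 - α) * Dθ + α * Dν) := by
    field_simp
    ring
  nlinarith [key, hpos, heq]
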